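/- Along the one-parameter family B_π(t) = Λ^π + t·e_{i+1}e_iᵀ, the corresponding tridiagonal matrix T(t) = φ_π(0,...,t,...,0) satisfies (T(t))_{i+1,i} = (λ_{i+1}^π − λ_i^π)² · t / ((λ_{i+1}^π − λ_i^π)² + t²), so the quotient βᵢ^π/T_{i+1,i} equals ((λ_{i+1}^π − λ_i^π)² + t²)/(λ_{i+1}^π − λ_i^π)² and tends to 1 as t → 0. -/

import Mathlib

open Matrix

/-- `L` is lower triangular with unit diagonal. -/
def IsUnipLower {n : ℕ} (L : Matrix (Fin n) (Fin n) ℝ) : Prop :=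
  (∀ i j : Fin n, i < j → L i j = 0) ∧ ∀ i : Fin n, L i i = 1

/-- `U` is upper triangular with strictly positive diagonal. -/
def IsUpperTriPos {n : ℕ} (U : Matrix (Fin n) (Fin n) ℝ) : Prop :=
  (∀ i j : Fin n, j < i → U i j = 0) ∧ ∀ i : Fin n, 0 < U i i

/-- The leading principal minor of order `k` of `M`. -/
def leadingMinor {n : ℕ} (M : Matrix (Fin n) (Fin n) ℝ) (k : ℕ) (h : k ≤ n) : ℝ :=
  (Matrix.of fun i j : Fin k => M (Fin.castLE h i) (Fin.castLE h j)).det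

/-- `M` is LU-positive: all leading principal minors are strictly positive. -/
def LUPositive {n : ℕ} (M : Matrix (Fin n) (Fin n) ℝ) : Prop :=
  ∀ k (h : k ≤ n), 0 < leadingMinor M k h

/-- `Q` is orthogonal. -/
def IsOrth {n : ℕ} (Q : Matrix (Fin n) (Fin n) ℝ) : Prop := Qᵀ * Q = 1

/-- `E` is a sign diagonal `diag(±1, …, ±1)`. -/
def IsSignDiag {n : ℕ} (E : Matrix (Fin n) (Fin n) ℝ) : Prop :=
  (∀ i j : Fin n, i ≠ j → E i j = 0) ∧ ∀ i : Fin n, E i i = 1 ∨ E i i = -1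

/-- `M` is tridiagonal. -/
def IsTridiag {n : ℕ} (M : Matrix (Fin n) (Fin n) ℝ) : Prop :=
  ∀ i j : Fin n, ((i : ℕ) + 1 < (j : ℕ) ∨ (j : ℕ) + 1 < (i : ℕ)) → M i j = 0

/-- Along the one-parameter family `B_π(t) = Λ^π + t e_{i+1} e_iᵀ`, the tridiagonal matrix
`T(t) = Q(L_π)ᵀ Λ^π Q(L_π)` satisfies
`T(t) (i+1) i = (λ_{i+1}^π − λ_i^π)² t / ((λ_{i+1}^π − λ_i^π)² + t²)`, so for `t ≠ 0` the
quotient `βᵢ^π / T_{i+1,i} = ((λ_{i+1}^π − λ_i^π)² + t²) / (λ_{i+1}^π − λ_i^π)²`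
(which tends to `1` as `t → 0`). -/
lemma sum_two_aux {n : ℕ} {i j : Fin n} (hij : i ≠ j) (f : Fin n → ℝ)
    (h : ∀ c, c ≠ i → c ≠ j → f c = 0) :
    ∑ c, f c = f i + f j := by
  rw [← Finset.sum_pair hij]
  refine (Finset.sum_subset (Finset.subset_univ _) ?_).symm
  intro x _ hx
  simp only [Finset.mem_insert, Finset.mem_singleton] at hx
  push_neg at hx
  exact h x hx.1 hx.2

theorem stmt17 (n : ℕ) (lam : Fin n → ℝ) (hlam : Function.Injective lam)
    (i j : Fin n) (hij : (i : ℕ) = (j : ℕ) + 1) (t : ℝ)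
    (L Q R : Matrix (Fin n) (Fin n) ℝ)
    (hL : IsUnipLower L)
    (hLB : L * (Matrix.diagonal lam + Matrix.single i j t) = Matrix.diagonal lam * L)
    (hQR : L = Q * R) (hQ : IsOrth Q) (hR : IsUpperTriPos R) :
    (Qᵀ * Matrix.diagonal lam * Q) i j =
        (lam i - lam j) ^ 2 * t / ((lam i - lam j) ^ 2 + t ^ 2) ∧
      (t ≠ 0 → t / ((Qᵀ * Matrix.diagonal lam * Q) i j) =
        ((lam i - lam j) ^ 2 + t ^ 2) / (lam i - lam j) ^ 2) := by
  obtain ⟨hLlow, hLdiag⟩ := hL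
  obtain ⟨hRup, hRdiag⟩ := hR
  have hQorth : Qᵀ * Q = 1 := hQ
  have hji : j < i := by rw [Fin.lt_def, hij]; omega
  have hne : i ≠ j := ne_of_gt hji
  set d : ℝ := lam i - lam j with hd_def
  have hd : d ≠ 0 := sub_ne_zero.mpr (fun h => hne (hlam h))
  set s : ℝ := t / d with hs_def
  -- entrywise version of `hLB`
  have key : ∀ a b : Fin n,
      L a b * lam b + (L * Matrix.single i j t) a b = lam a * L a b := by
    intro a b
    have h := (Matrix.ext_iff.mpr hLB) a b
    rw [Matrix.mul_add, Matrix.add_apply, Matrix.mul_diagonal, Matrix.diagonal_mul] at h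
    exact h
  have hoff : ∀ a b : Fin n, b ≠ j → a ≠ b → L a b = 0 := by
    intro a b hbj hab
    have h := key a b
    rw [Matrix.mul_single_apply_of_ne (c := t) i j a b hbj] at h
    have h2 : L a b * (lam b - lam a) = 0 := by linear_combination h
    have hlab : lam b - lam a ≠ 0 :=
      sub_ne_zero.mpr (fun h' => hab (hlam h'.symm))
    exact (mul_eq_zero.mp h2).resolve_right hlab
  have hLij : L i j = s := by
    have h := key i j
    rw [Matrix.mul_single_apply_same, hLdiag i] at h
    have h2 : L i j * d = t := by rw [hd_def]; linear_combination -h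
    rw [hs_def]
    field_simp
    linear_combination h2
  have hcolj : ∀ a : Fin n, a ≠ i → a ≠ j → L a j = 0 := by
    intro a hai haj
    have h := key a j
    rw [Matrix.mul_single_apply_same, hoff a i hne hai] at h
    have h2 : L a j * (lam j - lam a) = 0 := by linear_combination h
    have hlab : lam j - lam a ≠ 0 :=
      sub_ne_zero.mpr (fun h' => haj (hlam h'.symm))
    exact (mul_eq_zero.mp h2).resolve_right hlab
  have hLeq : L = 1 + Matrix.single i j s := by
    ext a b
    rw [Matrix.add_apply]
    rcases eq_or_ne a b with hab | hab
    · rw [← hab, Matrix.one_apply_eq, hLdiag a,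
        Matrix.single_apply_of_ne i j s a a (fun h => hne (h.1.trans h.2.symm)), add_zero]
    · rw [Matrix.one_apply_ne hab, zero_add]
      rcases eq_or_ne b j with hbj | hbj
      · rcases eq_or_ne a i with hai | hai
        · rw [hai, hbj, Matrix.single_apply_same i j s]
          exact hLij
        · rw [Matrix.single_apply_of_ne i j s a b (fun h => hai h.1.symm), hbj]
          exact hcolj a hai (fun h => hab (h.trans hbj.symm))
      · rw [Matrix.single_apply_of_ne i j s a b (fun h => hbj h.2.symm)]
        exact hoff a b hbj hab
  -- the explicit orthogonal factor
  set r : ℝ := Real.sqrt (1 + s ^ 2) with hr_def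
  have hr1 : (0:ℝ) < 1 + s ^ 2 := by positivity
  have hrpos : 0 < r := Real.sqrt_pos.mpr hr1
  have hrne : r ≠ 0 := hrpos.ne'
  have hr2 : r ^ 2 = 1 + s ^ 2 := Real.sq_sqrt hr1.le
  clear_value r s d
  set Q0 : Matrix (Fin n) (Fin n) ℝ := Matrix.of (fun a b =>
    if a = i ∧ b = i then 1/r else if a = i ∧ b = j then s/r
    else if a = j ∧ b = i then -(s/r) else if a = j ∧ b = j then 1/r
    else if a = b then 1 else 0) with hQ0_def
  have hQ0ii : Q0 i i = 1/r := by simp [hQ0_def]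
  have hQ0ij : Q0 i j = s/r := by simp [hQ0_def, hne, hne.symm]
  have hQ0ji : Q0 j i = -(s/r) := by simp [hQ0_def, hne, hne.symm]
  have hQ0jj : Q0 j j = 1/r := by simp [hQ0_def, hne, hne.symm]
  have hQ0diag : ∀ a : Fin n, a ≠ i → a ≠ j → Q0 a a = 1 := by
    intro a hai haj; simp [hQ0_def, hai, haj]
  have hQ0row : ∀ a b : Fin n, a ≠ i → a ≠ j → a ≠ b → Q0 a b = 0 := by
    intro a b hai haj hab; simp [hQ0_def, hai, haj, hab]
  have hQ0col : ∀ a b : Fin n, b ≠ i → b ≠ j → a ≠ b → Q0 a b = 0 := by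
    intro a b hbi hbj hab
    rcases eq_or_ne a i with hai | hai
    · simp [hQ0_def, hai, hbi, hbj, hab, hne, hne.symm, Ne.symm hbi, Ne.symm hbj]
    · rcases eq_or_ne a j with haj | haj
      · simp [hQ0_def, haj, hbi, hbj, hab, hai, hne, hne.symm, Ne.symm hbi, Ne.symm hbj]
      · simp [hQ0_def, hai, haj, hab]
  have hQ0orth : Q0ᵀ * Q0 = 1 := by
    ext a b
    rw [Matrix.mul_apply]
    simp only [Matrix.transpose_apply]
    by_cases ha : a = i ∨ a = j
    · have hsum : ∑ c, Q0 c a * Q0 c b = Q0 i a * Q0 i b + Q0 j a * Q0 j b := by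
        refine sum_two_aux hne _ (fun c hci hcj => ?_)
        have hca : c ≠ a := by
          rcases ha with h | h
          · rw [h]; exact hci
          · rw [h]; exact hcj
        rw [hQ0row c a hci hcj hca, zero_mul]
      rw [hsum]
      rcases ha with hai | haj
      · rw [hai]
        rcases eq_or_ne b i with hbi | hbi
        · rw [hbi, hQ0ii, hQ0ji, Matrix.one_apply_eq]
          field_simp
          linear_combination -hr2
        · rcases eq_or_ne b j with hbj | hbj
          · rw [hbj, hQ0ii, hQ0ij, hQ0ji, hQ0jj, Matrix.one_apply_ne hne]
            ring
          · rw [hQ0col i b hbi hbj (Ne.symm hbi), hQ0col j b hbi hbj (Ne.symm hbj),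
              Matrix.one_apply_ne (Ne.symm hbi)]
            ring
      · rw [haj]
        rcases eq_or_ne b j with hbj | hbj
        · rw [hbj, hQ0ij, hQ0jj, Matrix.one_apply_eq]
          field_simp
          linear_combination -hr2
        · rcases eq_or_ne b i with hbi | hbi
          · rw [hbi, hQ0ii, hQ0ij, hQ0ji, hQ0jj, Matrix.one_apply_ne (Ne.symm hne)]
            ring
          · rw [hQ0col i b hbi hbj (Ne.symm hbi), hQ0col j b hbi hbj (Ne.symm hbj),
              Matrix.one_apply_ne (Ne.symm hbj)]
            ring
    · push_neg at ha
      have hsum : ∑ c, Q0 c a * Q0 c b = Q0 a a * Q0 a b := by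
        refine Finset.sum_eq_single a (fun c _ hca => ?_) (fun h => absurd (Finset.mem_univ a) h)
        rw [hQ0col c a ha.1 ha.2 hca, zero_mul]
      rw [hsum, hQ0diag a ha.1 ha.2, one_mul]
      rcases eq_or_ne a b with hab | hab
      · rw [← hab, hQ0diag a ha.1 ha.2, Matrix.one_apply_eq]
      · rw [hQ0row a b ha.1 ha.2 hab, Matrix.one_apply_ne hab]
  have hQ0orth' : Q0 * Q0ᵀ = 1 := mul_eq_one_comm.mp hQ0orth
  -- the triangular factor
  set R0 : Matrix (Fin n) (Fin n) ℝ := Q0ᵀ * L with hR0_def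
  have hLQR0 : L = Q0 * R0 := by
    rw [hR0_def, ← Matrix.mul_assoc, hQ0orth', Matrix.one_mul]
  have hR0 : ∀ a b : Fin n, R0 a b = Q0 b a + (if b = j then Q0 i a * s else 0) := by
    intro a b
    rw [hR0_def, hLeq, Matrix.mul_add, Matrix.add_apply, Matrix.mul_one,
      Matrix.transpose_apply]
    rcases eq_or_ne b j with hbj | hbj
    · rw [hbj, Matrix.mul_single_apply_same, Matrix.transpose_apply, if_pos rfl]
    · rw [Matrix.mul_single_apply_of_ne (c := s) i j a b hbj, if_neg hbj]
  have hR0up : ∀ a b : Fin n, b < a → R0 a b = 0 := by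
    intro a b hba
    have hab : b ≠ a := ne_of_lt hba
    rw [hR0 a b]
    rcases eq_or_ne b j with hbj | hbj
    · rw [if_pos hbj, hbj]
      rcases eq_or_ne a i with hai | hai
      · rw [hai, hQ0ji, hQ0ii]; ring
      · have haj : a ≠ j := fun h => hab (hbj.trans h.symm)
        rw [hQ0col j a hai haj (fun h => haj h.symm),
          hQ0col i a hai haj (fun h => hai h.symm), zero_mul, add_zero]
    · rw [if_neg hbj, add_zero]
      rcases eq_or_ne b i with hbi | hbi
      · have hai : a ≠ i := fun h => hab (hbi.trans h.symm)
        have haj : a ≠ j := by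
          intro h; rw [hbi, h] at hba; exact lt_asymm hji hba
        exact hQ0col b a hai haj hab
      · exact hQ0row b a hbi hbj hab
  have hR0ii : R0 i i = 1/r := by
    rw [hR0 i i, if_neg hne, add_zero, hQ0ii]
  have hR0jj : R0 j j = r := by
    rw [hR0 j j, if_pos rfl, hQ0jj, hQ0ij]
    field_simp
    linear_combination -hr2
  have hR0diag : ∀ a : Fin n, 0 < R0 a a := by
    intro a
    rcases eq_or_ne a i with hai | hai
    · rw [hai, hR0ii]; positivity
    · rcases eq_or_ne a j with haj | haj
      · rw [haj, hR0jj]; exact hrpos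
      · rw [hR0 a a, if_neg haj, add_zero, hQ0diag a hai haj]; norm_num
  have hR0tri : R0.BlockTriangular id := fun a b h => hR0up a b h
  -- invertibility of R
  have hRtri : R.BlockTriangular id := fun a b h => hRup a b h
  have hRdetpos : 0 < R.det := by
    rw [Matrix.det_of_upperTriangular hRtri]
    exact Finset.prod_pos (fun a _ => hRdiag a)
  have hRunit : IsUnit R.det := isUnit_iff_ne_zero.mpr hRdetpos.ne'
  -- the comparison matrix U
  set U : Matrix (Fin n) (Fin n) ℝ := R0 * R⁻¹ with hU_def
  have hQQ0U : Q = Q0 * U := by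
    have h1 : Q * R * R⁻¹ = Q0 * R0 * R⁻¹ := by rw [← hQR, ← hLQR0]
    rw [Matrix.mul_assoc, Matrix.mul_nonsing_inv R hRunit, Matrix.mul_one] at h1
    rw [h1, hU_def, Matrix.mul_assoc]
  have hUeq : U = Q0ᵀ * Q := by
    rw [hQQ0U, ← Matrix.mul_assoc, hQ0orth, Matrix.one_mul]
  have hUorth : Uᵀ * U = 1 := by
    rw [hUeq, Matrix.transpose_mul, Matrix.transpose_transpose, Matrix.mul_assoc,
      ← Matrix.mul_assoc Q0, hQ0orth', Matrix.one_mul, hQorth]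
  have hUunit : IsUnit U.det := by
    refine IsUnit.of_mul_eq_one Uᵀ.det ?_
    rw [← Matrix.det_mul, mul_eq_one_comm.mp hUorth, Matrix.det_one]
  have hUtri : U.BlockTriangular id := by
    haveI : Invertible R := R.invertibleOfIsUnitDet hRunit
    exact Matrix.BlockTriangular.mul hR0tri
      (Matrix.blockTriangular_inv_of_blockTriangular hRtri)
  have hUinvtri : U⁻¹.BlockTriangular id := by
    haveI : Invertible U := U.invertibleOfIsUnitDet hUunit
    exact Matrix.blockTriangular_inv_of_blockTriangular hUtri
  have hUT : Uᵀ = U⁻¹ := (Matrix.inv_eq_left_inv hUorth).symm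
  have hUoffdiag : ∀ a b : Fin n, a ≠ b → U a b = 0 := by
    intro a b hab
    rcases lt_or_gt_of_ne hab with h | h
    · have h0 : Uᵀ b a = 0 := by rw [hUT]; exact hUinvtri h
      rwa [Matrix.transpose_apply] at h0
    · exact hUtri h
  have hRR : R0 = U * R := by
    rw [hU_def, Matrix.mul_assoc, Matrix.nonsing_inv_mul R hRunit, Matrix.mul_one]
  have hUdiagone : ∀ a : Fin n, U a a = 1 := by
    intro a
    have h1 : U a a ^ 2 = 1 := by
      have h := (Matrix.ext_iff.mpr hUorth) a a
      rw [Matrix.mul_apply, Matrix.one_apply_eq] at h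
      rw [Finset.sum_eq_single a (fun c _ hca => by
          rw [Matrix.transpose_apply, hUoffdiag c a hca, mul_zero])
        (fun h' => absurd (Finset.mem_univ a) h')] at h
      rw [Matrix.transpose_apply] at h
      linear_combination h
    have h2 : R0 a a = U a a * R a a := by
      have h := (Matrix.ext_iff.mpr hRR) a a
      rw [Matrix.mul_apply] at h
      rwa [Finset.sum_eq_single a (fun c _ hca => by
          rw [hUoffdiag a c (fun hh => hca hh.symm), zero_mul])
        (fun h' => absurd (Finset.mem_univ a) h')] at h
    have hpos : 0 < U a a := by
      have hra := hRdiag a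
      have hr0a := hR0diag a
      nlinarith [h2]
    have h3 : (U a a - 1) * (U a a + 1) = 0 := by linear_combination h1
    rcases mul_eq_zero.mp h3 with h4 | h4
    · linarith
    · linarith
  have hUone : U = 1 := by
    ext a b
    rcases eq_or_ne a b with hab | hab
    · rw [← hab, hUdiagone a, Matrix.one_apply_eq]
    · rw [hUoffdiag a b hab, Matrix.one_apply_ne hab]
  have hQeq : Q = Q0 := by rw [hQQ0U, hUone, Matrix.mul_one]
  -- the final computation
  have hdt : (0:ℝ) < d ^ 2 + t ^ 2 := by positivity
  have hTij : (Qᵀ * Matrix.diagonal lam * Q) i j = d ^ 2 * t / (d ^ 2 + t ^ 2) := by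
    rw [hQeq, Matrix.mul_apply]
    simp only [Matrix.mul_diagonal, Matrix.transpose_apply]
    rw [sum_two_aux hne _ (fun c hci hcj => by
      rw [hQ0row c i hci hcj hci, zero_mul, zero_mul])]
    rw [hQ0ii, hQ0ij, hQ0ji, hQ0jj]
    have e1 : 1/r * lam i * (s/r) + -(s/r) * lam j * (1/r) = s * d / r ^ 2 := by
      rw [hd_def]
      field_simp
      ring
    rw [e1, hr2, hs_def]
    field_simp
  refine ⟨hTij, fun ht => ?_⟩
  rw [hTij]
  have hd2 : d ^ 2 ≠ 0 := pow_ne_zero 2 hd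
  field_simp
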